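/- Let x ∈ A^ℕ be a linearly recurrent sequence with constant K that is not ultimately periodic. Then: (1) for every n ≥ 1 the number of distinct factors of x of length n is at most Kn; (2) x is (K+1)-power free, i.e., if u^{K+1} is a factor of x then u is the empty word; (3) for every nonempty factor u of x and every return word w ∈ R_u one has |w| > |u|/K; (4) for every nonempty factor u of x, the number of return words satisfies #R_u ≤ K(K+1)². -/

import Mathlib

/-- The factor `x_{[i, i+n)}` of a sequence. -/
def factorAt {A : Type*} (x : ℕ → A) (i n : ℕ) : List A := (List.range n).map fun k => x (i + k)

/-- `i` is an occurrence of the word `u` in the sequence `x`. -/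
def OccursAt {A : Type*} (x : ℕ → A) (u : List A) (i : ℕ) : Prop := factorAt x i u.length = u

/-- `u` is a factor of `x`. -/
def IsFactor {A : Type*} (x : ℕ → A) (u : List A) : Prop := ∃ i, OccursAt x u i

/-- `u` occurs in `x` with bounded gaps (its set of occurrences is syndetic). -/
def BoundedGaps {A : Type*} (x : ℕ → A) (u : List A) : Prop :=
  ∃ g, 0 < g ∧ ∀ i, ∃ j, i ≤ j ∧ j < i + g ∧ OccursAt x u j

/-- `x` is uniformly recurrent: every factor occurs with bounded gaps. -/
def UniformlyRecurrent {A : Type*} (x : ℕ → A) : Prop :=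
  ∀ u, IsFactor x u → BoundedGaps x u

/-- `w` is a return word to `u` in `x`: `w = x_{[j,k)}` for consecutive
occurrences `j < k` of `u` in `x`. -/
def IsReturnWord {A : Type*} (x : ℕ → A) (u w : List A) : Prop :=
  ∃ j k, j < k ∧ OccursAt x u j ∧ OccursAt x u k ∧
    (∀ m, j < m → m < k → ¬ OccursAt x u m) ∧ w = factorAt x j (k - j)

/-- `x` is linearly recurrent with constant `K`: it is uniformly recurrent and every
return word `w` to every nonempty factor `u` satisfies `|w| ≤ K|u|`. -/
def LinearlyRecurrent {A : Type*} (x : ℕ → A) (K : ℕ) : Prop :=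
  UniformlyRecurrent x ∧ ∀ u w, u ≠ [] → IsReturnWord x u w → w.length ≤ K * u.length

/-- `x` is ultimately periodic. -/
def UltimatelyPeriodic {A : Type*} (x : ℕ → A) : Prop :=
  ∃ N t, 0 < t ∧ ∀ n, N ≤ n → x (n + t) = x n

namespace LRP

variable {A : Type*}

@[simp] lemma length_factorAt (x : ℕ → A) (i n : ℕ) : (factorAt x i n).length = n := by
  simp [factorAt]

lemma getElem_factorAt (x : ℕ → A) (i n t : ℕ) (h : t < (factorAt x i n).length) :
    (factorAt x i n)[t] = x (i + t) := by
  simp [factorAt]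

lemma occ_apply {x : ℕ → A} {u : List A} {i : ℕ} (h : OccursAt x u i) {t : ℕ}
    (ht : t < u.length) : x (i + t) = u[t] := by
  have ht' : t < (factorAt x i u.length).length := by simpa using ht
  have := List.getElem_of_eq h ht'
  rw [getElem_factorAt] at this
  exact this

lemma occursAt_intro {x : ℕ → A} {u : List A} {i : ℕ}
    (h : ∀ t (ht : t < u.length), x (i + t) = u[t]) : OccursAt x u i := by
  apply List.ext_getElem (by simp)
  intro t h1 h2
  rw [getElem_factorAt]
  exact h t h2

lemma occ_factorAt (x : ℕ → A) (i n : ℕ) : OccursAt x (factorAt x i n) i := by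
  unfold OccursAt
  rw [length_factorAt]

lemma isFactor_factorAt (x : ℕ → A) (i n : ℕ) : IsFactor x (factorAt x i n) :=
  ⟨i, occ_factorAt x i n⟩

lemma occ_unique {x : ℕ → A} {u v : List A} {i : ℕ} (hu : OccursAt x u i)
    (hv : OccursAt x v i) (h : u.length = v.length) : u = v := by
  rw [← hu, ← hv, h]

lemma factorAt_add_append (x : ℕ → A) (i a b : ℕ) :
    factorAt x i (a + b) = factorAt x i a ++ factorAt x (i + a) b := by
  unfold factorAt
  rw [List.range_add, List.map_append, List.map_map]
  congr 1
  apply List.map_congr_left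
  intro k _
  simp [add_assoc]

lemma occ_append {x : ℕ → A} {u v : List A} {i : ℕ} :
    OccursAt x (u ++ v) i ↔ OccursAt x u i ∧ OccursAt x v (i + u.length) := by
  unfold OccursAt
  rw [List.length_append, factorAt_add_append]
  constructor
  · intro h
    have := List.append_inj h (by simp)
    exact ⟨this.1, this.2⟩
  · rintro ⟨h1, h2⟩
    rw [h1, h2]

lemma factorAt_take (x : ℕ → A) (i : ℕ) {n L : ℕ} (h : n ≤ L) :
    (factorAt x i L).take n = factorAt x i n := by
  unfold factorAt
  rw [← List.map_take, List.take_range, Nat.min_eq_left h]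

lemma occ_take {x : ℕ → A} {u : List A} {i : ℕ} (h : OccursAt x u i) {n : ℕ}
    (hn : n ≤ u.length) : OccursAt x (u.take n) i := by
  unfold OccursAt at *
  rw [List.length_take, Nat.min_eq_left hn]
  conv_rhs => rw [← h]
  rw [factorAt_take x i hn]

lemma exists_occ_ge {x : ℕ → A} (hUR : UniformlyRecurrent x) {u : List A}
    (hu : IsFactor x u) (m : ℕ) : ∃ j, m ≤ j ∧ OccursAt x u j := by
  obtain ⟨g, _, h⟩ := hUR u hu
  obtain ⟨j, h1, _, h3⟩ := h m
  exact ⟨j, h1, h3⟩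



lemma one_le_K {x : ℕ → A} {K : ℕ} (hlr : LinearlyRecurrent x K) : 1 ≤ K := by
  classical
  set u := factorAt x 0 1 with hu
  have hune : u ≠ [] := by
    intro h
    have := length_factorAt x 0 1
    rw [← hu, h] at this
    simp at this
  have hocc : OccursAt x u 0 := occ_factorAt x 0 1
  have hex : ∃ j, 1 ≤ j ∧ OccursAt x u j := exists_occ_ge hlr.1 ⟨0, hocc⟩ 1
  set b := Nat.find hex with hb
  obtain ⟨h1, h2⟩ := Nat.find_spec hex
  have hcons : ∀ c, 0 < c → c < b → ¬ OccursAt x u c := by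
    intro c hc1 hc2 hc
    exact Nat.find_min hex hc2 ⟨hc1, hc⟩
  have hret : IsReturnWord x u (factorAt x 0 (b - 0)) := ⟨0, b, h1, hocc, h2, hcons, rfl⟩
  have hlen := hlr.2 u _ hune hret
  rw [length_factorAt] at hlen
  have hul : u.length = 1 := length_factorAt x 0 1
  rw [hul, mul_one] at hlen
  omega

lemma occ_window {x : ℕ → A} {K : ℕ} (hlr : LinearlyRecurrent x K) {u : List A}
    (hune : u ≠ []) (hf : IsFactor x u) {m a : ℕ} (ha : a ≤ m) (hocc : OccursAt x u a) :
    ∃ b, m ≤ b ∧ b < m + K * u.length ∧ OccursAt x u b := by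
  classical
  have hK : 1 ≤ K := one_le_K hlr
  have hn : 1 ≤ u.length := List.length_pos_iff.mpr hune
  have hkl : 1 ≤ K * u.length := Nat.one_le_iff_ne_zero.mpr (by positivity)
  set kl := K * u.length with hkldef
  by_cases hm : OccursAt x u m
  · exact ⟨m, le_refl m, by omega, hm⟩
  · have ham : a < m := lt_of_le_of_ne ha (by rintro rfl; exact hm hocc)
    have hex : ∃ j, m ≤ j ∧ OccursAt x u j := exists_occ_ge hlr.1 hf m
    set b := Nat.find hex with hb
    obtain ⟨hmb, hoccb⟩ := Nat.find_spec hex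
    set a' := Nat.findGreatest (fun c => OccursAt x u c) (m - 1) with ha'
    have ha'occ : OccursAt x u a' := Nat.findGreatest_spec (m := a) (by omega) hocc
    have ha'le : a' ≤ m - 1 := Nat.findGreatest_le _
    have hcons : ∀ c, a' < c → c < b → ¬ OccursAt x u c := by
      intro c h1 h2 hc
      by_cases hcm : c ≤ m - 1
      · exact Nat.findGreatest_is_greatest h1 hcm hc
      · exact Nat.find_min hex h2 ⟨by omega, hc⟩
    have ha'b : a' < b := by omega
    have hret : IsReturnWord x u (factorAt x a' (b - a')) := ⟨a', b, ha'b, ha'occ, hoccb, hcons, rfl⟩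
    have hlen := hlr.2 u _ hune hret
    rw [length_factorAt] at hlen
    exact ⟨b, hmb, by omega, hoccb⟩

lemma finite_and_ncard_le {α : Type*} {s : Set α} {N : ℕ}
    (h : ∀ t : Finset α, ↑t ⊆ s → t.card ≤ N) : s.Finite ∧ s.ncard ≤ N := by
  have hfin : s.Finite := by
    by_contra hinf
    obtain ⟨t, ht, hc⟩ := Set.Infinite.exists_subset_card_eq hinf (N + 1)
    have := h t ht
    omega
  refine ⟨hfin, ?_⟩
  have := h hfin.toFinset (by simp)
  rwa [Set.ncard_eq_toFinset_card s hfin]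

lemma complexity_bound {x : ℕ → A} {K : ℕ} (hlr : LinearlyRecurrent x K) {n : ℕ}
    (hn : 1 ≤ n) (S : Finset (List A))
    (hS : ↑S ⊆ { u : List A | u.length = n ∧ IsFactor x u }) : S.card ≤ K * n := by
  classical
  set fo : List A → ℕ := fun u => if h : IsFactor x u then h.choose else 0 with hfo
  have hfo_occ : ∀ u, IsFactor x u → OccursAt x u (fo u) := by
    intro u h
    simp only [hfo, dif_pos h]
    exact h.choose_spec
  set m := S.sup fo with hm
  have key : ∀ u ∈ S, ∃ b, m ≤ b ∧ b < m + K * n ∧ OccursAt x u b := by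
    intro u hu
    obtain ⟨hlen, hfac⟩ := hS hu
    have h1 : fo u ≤ m := Finset.le_sup hu
    have hune : u ≠ [] := by intro h; rw [h] at hlen; simp at hlen; omega
    obtain ⟨b, hb1, hb2, hb3⟩ := occ_window hlr hune hfac h1 (hfo_occ u hfac)
    rw [hlen] at hb2
    exact ⟨b, hb1, hb2, hb3⟩
  set pick : List A → ℕ := fun u =>
    if h : ∃ b, m ≤ b ∧ b < m + K * n ∧ OccursAt x u b then h.choose else 0 with hpick
  have hpick_spec : ∀ u ∈ S, m ≤ pick u ∧ pick u < m + K * n ∧ OccursAt x u (pick u) := by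
    intro u hu
    have h := key u hu
    simp only [hpick, dif_pos h]
    exact h.choose_spec
  have := Finset.card_le_card_of_injOn pick
    (t := Finset.Ico m (m + K * n))
    (by intro u hu
        obtain ⟨h1, h2, _⟩ := hpick_spec u hu
        simp [Finset.mem_Ico]
        omega)
    (by intro u hu v hv he
        obtain ⟨_, _, h3⟩ := hpick_spec u (by exact_mod_cast hu)
        obtain ⟨_, _, h3'⟩ := hpick_spec v (by exact_mod_cast hv)
        rw [he] at h3
        have hul : u.length = n := (hS (by exact_mod_cast hu)).1
        have hvl : v.length = n := (hS (by exact_mod_cast hv)).1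
        exact occ_unique h3 h3' (by omega))
  simpa using this



lemma mem_Fset (x : ℕ → A) (i n : ℕ) :
    factorAt x i n ∈ { u : List A | u.length = n ∧ IsFactor x u } :=
  ⟨length_factorAt x i n, isFactor_factorAt x i n⟩

lemma MH {x : ℕ → A}
    (hfin : ∀ m, 1 ≤ m → { u : List A | u.length = m ∧ IsFactor x u }.Finite)
    {n : ℕ} (hn : 1 ≤ n)
    (hcard : { u : List A | u.length = n ∧ IsFactor x u }.ncard ≤ n) :
    UltimatelyPeriodic x := by
  classical
  by_cases hA : { u : List A | u.length = 1 ∧ IsFactor x u }.ncard ≤ 1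
  · -- x is constant
    have hconst : ∀ i, x i = x 0 := by
      intro i
      have h1 := mem_Fset x i 1
      have h2 := mem_Fset x 0 1
      have heq : factorAt x i 1 = factorAt x 0 1 := by
        by_contra hne
        have : 1 < { u : List A | u.length = 1 ∧ IsFactor x u }.ncard := by
          rw [Set.one_lt_ncard_iff (hfin 1 le_rfl)]
          exact ⟨_, _, h1, h2, hne⟩
        omega
      have hb : (0:ℕ) < (factorAt x i 1).length := by simp
      have := List.getElem_of_eq heq hb
      rw [getElem_factorAt, getElem_factorAt] at this
      simpa using this
    exact ⟨0, 1, one_pos, fun k _ => by rw [hconst (k + 1), hconst k]⟩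
  · have hB : ∃ m, 1 ≤ m ∧ { u : List A | u.length = m + 1 ∧ IsFactor x u }.ncard ≤
        { u : List A | u.length = m ∧ IsFactor x u }.ncard := by
      by_contra hB
      push_neg at hB
      have grow : ∀ m, 1 ≤ m → m + 1 ≤ { u : List A | u.length = m ∧ IsFactor x u }.ncard := by
        intro m hm
        induction m, hm using Nat.le_induction with
        | base => omega
        | succ m hm IH =>
          have := hB m hm
          omega
      have := grow n hn
      omega
    obtain ⟨m, hm, hmle⟩ := hB
    have himg : (fun v : List A => v.take m) '' { u : List A | u.length = m + 1 ∧ IsFactor x u }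
        = { u : List A | u.length = m ∧ IsFactor x u } := by
      ext u
      constructor
      · rintro ⟨v, ⟨hvlen, i, hocc⟩, rfl⟩
        refine ⟨by simp only [List.length_take]; omega, ⟨i, occ_take hocc (by omega)⟩⟩
      · rintro ⟨hlen, i, hocc⟩
        refine ⟨factorAt x i (m + 1), mem_Fset x i (m + 1), ?_⟩
        show (factorAt x i (m + 1)).take m = u
        rw [factorAt_take x i (by omega)]
        have h5 : factorAt x i u.length = u := hocc
        rw [← h5, hlen]
    have hfin1 := hfin (m + 1) (by omega)
    have hinj : Set.InjOn (fun v : List A => v.take m)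
        { u : List A | u.length = m + 1 ∧ IsFactor x u } := by
      apply Set.injOn_of_ncard_image_eq ?_ hfin1
      rw [himg]
      have h1 := Set.ncard_image_le (f := fun v : List A => v.take m) hfin1
      rw [himg] at h1
      omega
    have step : ∀ a b, factorAt x a m = factorAt x b m →
        factorAt x a (m + 1) = factorAt x b (m + 1) := by
      intro a b hab
      apply hinj (mem_Fset x a (m + 1)) (mem_Fset x b (m + 1))
      show (factorAt x a (m + 1)).take m = (factorAt x b (m + 1)).take m
      rw [factorAt_take x a (by omega), factorAt_take x b (by omega)]
      exact hab
    have step1 : ∀ a b, factorAt x a m = factorAt x b m →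
        factorAt x (a + 1) m = factorAt x (b + 1) m := by
      intro a b hab
      have h2 := step a b hab
      apply List.ext_getElem (by simp)
      intro t h1t h2t
      rw [getElem_factorAt, getElem_factorAt]
      simp only [length_factorAt] at h1t
      have hb : t + 1 < (factorAt x a (m + 1)).length := by
        simp only [length_factorAt]; omega
      have h3 := List.getElem_of_eq h2 hb
      rw [getElem_factorAt, getElem_factorAt] at h3
      rw [show a + 1 + t = a + (t + 1) by omega, show b + 1 + t = b + (t + 1) by omega]
      exact h3
    have hfinm := hfin m hm
    have hex2 : ∃ i j : ℕ, i < j ∧ factorAt x i m = factorAt x j m := by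
      set φ : ℕ → {l // l ∈ hfinm.toFinset} := fun i =>
        ⟨factorAt x i m, by
          rw [Set.Finite.mem_toFinset]
          exact mem_Fset x i m⟩ with hphi
      obtain ⟨i, j, hij, he⟩ := Finite.exists_ne_map_eq_of_infinite φ
      have heq : factorAt x i m = factorAt x j m := congrArg Subtype.val he
      rcases lt_or_gt_of_ne hij with h | h
      exacts [⟨i, j, h, heq⟩, ⟨j, i, h, heq.symm⟩]
    obtain ⟨i, j, hij, heq⟩ := hex2
    have chain : ∀ s, factorAt x (i + s) m = factorAt x (j + s) m := by
      intro s
      induction s with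
      | zero => simpa using heq
      | succ s IH =>
        have := step1 _ _ IH
        rw [show i + s + 1 = i + (s + 1) by omega, show j + s + 1 = j + (s + 1) by omega] at this
        exact this
    have hfl : ∀ s, x (i + s) = x (j + s) := by
      intro s
      have h1 := chain s
      have hb : (0:ℕ) < (factorAt x (i + s) m).length := by
        simp only [length_factorAt]; omega
      have h2 := List.getElem_of_eq h1 hb
      rw [getElem_factorAt, getElem_factorAt] at h2
      simpa using h2
    refine ⟨i, j - i, by omega, ?_⟩
    intro k hk
    have := hfl (k - i)
    rw [show i + (k - i) = k by omega, show j + (k - i) = k + (j - i) by omega] at this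
    exact this.symm



lemma occ_flatten_replicate {x : ℕ → A} {u : List A} {c i : ℕ}
    (h : OccursAt x ((List.replicate c u).flatten) i) :
    ∀ s, s < c → OccursAt x u (i + s * u.length) := by
  induction c generalizing i with
  | zero => intro s hs; omega
  | succ c IH =>
    rw [List.replicate_succ, List.flatten_cons, occ_append] at h
    intro s hs
    match s with
    | 0 => simpa using h.1
    | s + 1 =>
      have := IH h.2 s (by omega)
      rw [show i + u.length + s * u.length = i + (s + 1) * u.length by ring] at this
      exact this

lemma occ_flatten_replicate_intro {x : ℕ → A} {u : List A} {c i : ℕ}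
    (h : ∀ s, s < c → OccursAt x u (i + s * u.length)) :
    OccursAt x ((List.replicate c u).flatten) i := by
  induction c generalizing i with
  | zero =>
    show factorAt x i _ = _
    simp [factorAt]
  | succ c IH =>
    rw [List.replicate_succ, List.flatten_cons, occ_append]
    constructor
    · simpa using h 0 (by omega)
    · apply IH
      intro s hs
      have := h (s + 1) (by omega)
      rw [show i + (s + 1) * u.length = i + u.length + s * u.length by ring] at this
      exact this

lemma power_free {x : ℕ → A} {K : ℕ} (hlr : LinearlyRecurrent x K)
    (hnp : ¬ UltimatelyPeriodic x)
    (hfin : ∀ m, 1 ≤ m → { u : List A | u.length = m ∧ IsFactor x u }.Finite) :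
    ∀ u : List A, IsFactor x ((List.replicate (K + 1) u).flatten) → u = [] := by
  intro u hfac
  by_contra hne
  classical
  set n := u.length with hn
  have hn1 : 1 ≤ n := List.length_pos_iff.mpr hne
  have hK : 1 ≤ K := one_le_K hlr
  apply hnp
  apply MH hfin hn1
  -- show ncard ≤ n
  have hFfin := hfin n hn1
  set fo : List A → ℕ := fun z => if h : IsFactor x z then h.choose else 0 with hfo
  have hfo_occ : ∀ z, IsFactor x z → OccursAt x z (fo z) := by
    intro z h
    simp only [hfo, dif_pos h]
    exact h.choose_spec
  set m := hFfin.toFinset.sup fo with hm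
  obtain ⟨i, hi, hocc⟩ := exists_occ_ge hlr.1 hfac m
  have hocc' : ∀ s, s ≤ K → OccursAt x u (i + s * n) := by
    intro s hs
    exact occ_flatten_replicate hocc s (by omega)
  have PER : ∀ a, a < K * n → x (i + (a + n)) = x (i + a) := by
    intro a ha
    obtain ⟨s, r, hr, hsa, hsK⟩ : ∃ s r, r < n ∧ a = s * n + r ∧ s < K := by
      refine ⟨a / n, a % n, Nat.mod_lt _ (by omega), ?_, ?_⟩
      · exact (Nat.div_add_mod' a n).symm
      · rw [Nat.div_lt_iff_lt_mul (by omega : 0 < n)]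
        omega
    have e1 : x ((i + s * n) + r) = u[r]'(by omega) := occ_apply (hocc' s (by omega)) (by omega)
    have e2 : x ((i + (s + 1) * n) + r) = u[r]'(by omega) := occ_apply (hocc' (s + 1) (by omega)) (by omega)
    rw [show i + (a + n) = (i + (s + 1) * n) + r by rw [hsa]; ring,
        show i + a = (i + s * n) + r by rw [hsa]; ring]
    rw [e1, e2]
  have RED : ∀ a, a < K * n + n → x (i + a) = x (i + a % n) := by
    intro a
    induction a using Nat.strong_induction_on with
    | _ a IH =>
      intro ha
      by_cases hc : a < n
      · rw [Nat.mod_eq_of_lt hc]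
      · have h1 : x (i + a) = x (i + ((a - n) + n)) := by congr 1; omega
        have h2 := PER (a - n) (by omega)
        have h3 := IH (a - n) (by omega) (by omega)
        rw [h1, h2, h3, ← Nat.mod_eq_sub_mod (by omega)]
  -- build injection from factor set into residues
  have key : ∀ z ∈ hFfin.toFinset, ∃ b, i ≤ b ∧ b < i + K * n ∧ OccursAt x z b := by
    intro z hz
    rw [Set.Finite.mem_toFinset] at hz
    obtain ⟨hzl, hzf⟩ := hz
    have h1 : fo z ≤ m := Finset.le_sup (by rw [Set.Finite.mem_toFinset]; exact ⟨hzl, hzf⟩)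
    have hzne : z ≠ [] := by intro h; rw [h] at hzl; simp at hzl; omega
    obtain ⟨b, hb1, hb2, hb3⟩ := occ_window hlr hzne hzf (le_trans h1 hi) (hfo_occ z hzf)
    rw [hzl] at hb2
    exact ⟨b, hb1, hb2, hb3⟩
  set pick : List A → ℕ := fun z =>
    if h : ∃ b, i ≤ b ∧ b < i + K * n ∧ OccursAt x z b then h.choose else 0 with hpick
  have hpick_spec : ∀ z ∈ hFfin.toFinset, i ≤ pick z ∧ pick z < i + K * n ∧ OccursAt x z (pick z) := by
    intro z hz
    have h := key z hz
    simp only [hpick, dif_pos h]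
    exact h.choose_spec
  have hcard : hFfin.toFinset.card ≤ (Finset.range n).card := by
    apply Finset.card_le_card_of_injOn (fun z => (pick z - i) % n)
    · intro z hz
      simp only [Finset.mem_coe, Finset.mem_range]
      exact Nat.mod_lt _ (by omega)
    · intro z hz z' hz' he
      simp only [Finset.mem_coe] at hz hz'
      obtain ⟨hb1, hb2, hb3⟩ := hpick_spec z hz
      obtain ⟨hb1', hb2', hb3'⟩ := hpick_spec z' hz'
      have hzl : z.length = n := by
        rw [Set.Finite.mem_toFinset] at hz; exact hz.1
      have hzl' : z'.length = n := by
        rw [Set.Finite.mem_toFinset] at hz'; exact hz'.1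
      set d := pick z - i with hd
      set d' := pick z' - i with hd'
      have hdb : pick z = i + d := by omega
      have hdb' : pick z' = i + d' := by omega
      apply List.ext_getElem (by omega)
      intro t h1t h2t
      have e1 : x (pick z + t) = z[t] := occ_apply hb3 h1t
      have e2 : x (pick z' + t) = z'[t] := occ_apply hb3' h2t
      rw [← e1, ← e2]
      rw [hdb, hdb', show i + d + t = i + (d + t) by omega, show i + d' + t = i + (d' + t) by omega]
      rw [RED (d + t) (by omega), RED (d' + t) (by omega)]
      have hdd : d % n = d' % n := by simpa using he
      rw [Nat.add_mod d t n, Nat.add_mod d' t n, hdd]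
  rw [Set.ncard_eq_toFinset_card _ hFfin]
  simpa using hcard



lemma return_long {x : ℕ → A} {K : ℕ} (hlr : LinearlyRecurrent x K)
    (hpf : ∀ u : List A, IsFactor x ((List.replicate (K + 1) u).flatten) → u = []) :
    ∀ u w : List A, u ≠ [] → IsReturnWord x u w → u.length < K * w.length := by
  intro u w hu hret
  obtain ⟨j, k, hjk, hoj, hok, hbet, hw⟩ := hret
  have hwlen : w.length = k - j := by rw [hw, length_factorAt]
  set q := k - j with hq
  have hq1 : 1 ≤ q := by omega
  by_contra hcon
  push_neg at hcon
  rw [hwlen] at hcon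
  set n := u.length with hn
  -- period
  have hper : ∀ t, t < n → x (j + (t + q)) = x (j + t) := by
    intro t ht
    have e1 : x (j + t) = u[t] := occ_apply hoj ht
    have e2 : x (k + t) = u[t] := occ_apply hok ht
    rw [show j + (t + q) = k + t by omega]
    rw [e1, e2]
  have hoccw : OccursAt x w j := by
    show factorAt x j w.length = w
    rw [hwlen]
    exact hw.symm
  have hqkq : (K : ℕ) * q ≤ n := hcon
  have hocc_s : ∀ s, s ≤ K → OccursAt x w (j + s * q) := by
    intro s hs
    induction s with
    | zero => simpa using hoccw
    | succ s IH =>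
      have IH' := IH (by omega)
      apply occursAt_intro
      intro t ht
      have e1 : x ((j + s * q) + t) = w[t] := occ_apply IH' ht
      rw [← e1]
      have ht' : t < q := by omega
      have hsq : s * q + t < n := by
        have h1 : (s + 1) * q ≤ K * q := Nat.mul_le_mul_right q (by omega)
        have h2 : (s + 1) * q = s * q + q := by ring
        omega
      have := hper (s * q + t) hsq
      rw [show j + (s * q + t + q) = j + (s + 1) * q + t by ring,
          show j + (s * q + t) = j + s * q + t by ring] at this
      exact this
  have hoccpow : OccursAt x ((List.replicate (K + 1) w).flatten) j := by
    apply occ_flatten_replicate_intro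
    intro s hs
    rw [hwlen]
    exact hocc_s s (by omega)
  have hwnil := hpf w ⟨j, hoccpow⟩
  rw [hwnil] at hwlen
  simp at hwlen
  omega



lemma return_card {x : ℕ → A} {K : ℕ} (hlr : LinearlyRecurrent x K)
    (hrl : ∀ u w : List A, u ≠ [] → IsReturnWord x u w → u.length < K * w.length)
    {u : List A} (hu : u ≠ []) (hfu : IsFactor x u) (S : Finset (List A))
    (hS : ↑S ⊆ { w : List A | IsReturnWord x u w }) : S.card ≤ K * K * (K + 1) := by
  classical
  have hK : 1 ≤ K := one_le_K hlr
  set n := u.length with hn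
  have hn1 : 1 ≤ n := List.length_pos_iff.mpr hu
  set M := K * ((K + 1) * n) with hM
  set fo : List A → ℕ := fun w => if h : IsFactor x (w ++ u) then h.choose else 0 with hfo
  have hfo_occ : ∀ w, IsFactor x (w ++ u) → OccursAt x (w ++ u) (fo w) := by
    intro w h
    simp only [hfo, dif_pos h]
    exact h.choose_spec
  set m := S.sup fo with hm
  -- occurrence of w ++ u at j, from return-word data
  have hYj : ∀ w, IsReturnWord x u w → ∃ j, OccursAt x (w ++ u) j := by
    intro w hw
    obtain ⟨j, k, hjk, hoj, hok, hbet, hweq⟩ := hw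
    have hwl : w.length = k - j := by rw [hweq, length_factorAt]
    refine ⟨j, occ_append.mpr ⟨?_, ?_⟩⟩
    · show factorAt x j w.length = w
      rw [hwl]
      exact hweq.symm
    · rw [hwl, show j + (k - j) = k by omega]
      exact hok
  have hwin : ∀ w ∈ S, ∃ b, m ≤ b ∧ b < m + M ∧ OccursAt x (w ++ u) b := by
    intro w hw
    have hret := hS hw
    have hf : IsFactor x (w ++ u) := hYj w hret
    have h1 : fo w ≤ m := Finset.le_sup hw
    have hq : w.length ≤ K * n := hlr.2 u w hu hret
    obtain ⟨b, hb1, hb2, hb3⟩ := occ_window hlr (by simp [hu]) hf h1 (hfo_occ w hf)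
    refine ⟨b, hb1, ?_, hb3⟩
    rw [List.length_append] at hb2
    have hA : w.length + n ≤ (K + 1) * n := by
      have h5 : (K + 1) * n = K * n + n := by ring
      omega
    have hB : K * (w.length + n) ≤ K * ((K + 1) * n) := Nat.mul_le_mul_left K hA
    rw [← hn] at hb2
    omega
  set pick : List A → ℕ := fun w =>
    if h : ∃ b, m ≤ b ∧ b < m + M ∧ OccursAt x (w ++ u) b then h.choose else 0 with hpick
  have hpick_spec : ∀ w ∈ S, m ≤ pick w ∧ pick w < m + M ∧ OccursAt x (w ++ u) (pick w) := by
    intro w hw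
    have h := hwin w hw
    simp only [hpick, dif_pos h]
    exact h.choose_spec
  have key : ∀ w ∈ S, OccursAt x u (pick w) ∧ OccursAt x u (pick w + w.length) ∧
      (∀ c, pick w < c → c < pick w + w.length → ¬ OccursAt x u c) ∧
      n < K * w.length ∧ 1 ≤ w.length ∧ w = factorAt x (pick w) w.length := by
    intro w hw
    obtain ⟨hb1, hb2, hb3⟩ := hpick_spec w hw
    obtain ⟨j, k, hjk, hoj, hok, hbet, hweq⟩ := hS hw
    have hwl : w.length = k - j := by rw [hweq, length_factorAt]
    have hYlen : (w ++ u).length = w.length + n := by simp [hn]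
    have hYjocc : OccursAt x (w ++ u) j := by
      refine occ_append.mpr ⟨?_, ?_⟩
      · show factorAt x j w.length = w
        rw [hwl]
        exact hweq.symm
      · rw [hwl, show j + (k - j) = k by omega]
        exact hok
    have htake : (w ++ u).take n = u := by
      have hY : factorAt x j ((w ++ u).length) = w ++ u := hYjocc
      rw [← hY, factorAt_take x j (by rw [hYlen]; omega)]
      exact hoj
    have sub1 : OccursAt x u (pick w) := by
      have := occ_take hb3 (n := n) (by rw [hYlen]; omega)
      rwa [htake] at this
    have sub2 : OccursAt x u (pick w + w.length) := (occ_append.mp hb3).2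
    have sub3 : ∀ c, pick w < c → c < pick w + w.length → ¬ OccursAt x u c := by
      intro c hc1 hc2 hoc
      set d := c - pick w with hd
      apply hbet (j + d) (by omega) (by omega)
      apply occursAt_intro
      intro t ht
      have hbound : d + t < (w ++ u).length := by rw [hYlen]; omega
      have e1 : x (j + (d + t)) = (w ++ u)[d + t] := occ_apply hYjocc hbound
      have e2 : x (pick w + (d + t)) = (w ++ u)[d + t] := occ_apply hb3 hbound
      have e3 : x (c + t) = u[t] := occ_apply hoc ht
      rw [show j + d + t = j + (d + t) by omega, e1, ← e2,
          show pick w + (d + t) = c + t by omega, e3]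
    have sub4 : n < K * w.length := hrl u w hu ⟨j, k, hjk, hoj, hok, hbet, hweq⟩
    have sub5 : 1 ≤ w.length := by omega
    have sub6 : w = factorAt x (pick w) w.length := by
      have h7 := occ_take hb3 (n := w.length) (by rw [hYlen]; omega)
      rw [List.take_left] at h7
      exact h7.symm
    exact ⟨sub1, sub2, sub3, sub4, sub5, sub6⟩
  have inj1 : ∀ w ∈ S, ∀ w' ∈ S, pick w = pick w' → w = w' := by
    have main : ∀ w ∈ S, ∀ w' ∈ S, pick w = pick w' → w.length ≤ w'.length → w = w' := by
      intro w hw w' hw' he hle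
      obtain ⟨k1, k2, k3, k4, k5, k6⟩ := key w hw
      obtain ⟨k1', k2', k3', k4', k5', k6'⟩ := key w' hw'
      have hlen : w.length = w'.length := by
        by_contra hne
        have hlt : w.length < w'.length := by omega
        exact k3' (pick w' + w.length) (by omega) (by omega) (by rw [← he]; exact k2)
      rw [k6, k6', he, hlen]
    intro w hw w' hw' he
    rcases le_total w.length w'.length with h | h
    · exact main w hw w' hw' he h
    · exact (main w' hw' w hw he.symm h).symm
  set C := K * K * (K + 1) with hC
  have hC1 : 1 ≤ C := by
    rw [hC]
    have h0 : 0 < K * K * (K + 1) := Nat.mul_pos (Nat.mul_pos (by omega) (by omega)) (by omega)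
    omega
  set g : List A → ℕ := fun w => K * (pick w - m) / (n + 1) with hg
  have hmono : ∀ w ∈ S, ∀ w' ∈ S, pick w < pick w' → g w ≠ g w' := by
    intro w hw w' hw' hlt hgeq
    obtain ⟨k1, k2, k3, k4, k5, k6⟩ := key w hw
    obtain ⟨k1', k2', k3', k4', k5', k6'⟩ := key w' hw'
    have hge : pick w + w.length ≤ pick w' := by
      by_contra hcc
      exact k3 (pick w') hlt (by omega) k1'
    have h1 : n + 1 ≤ K * (pick w' - pick w) := by
      have := Nat.mul_le_mul_left K (show w.length ≤ pick w' - pick w by omega)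
      omega
    obtain ⟨hb1, _, _⟩ := hpick_spec w hw
    obtain ⟨hb1', _, _⟩ := hpick_spec w' hw'
    have hsplit : K * (pick w' - m) = K * (pick w - m) + K * (pick w' - pick w) := by
      rw [← Nat.mul_add]
      congr 1
      omega
    have hdiv : K * (pick w - m) / (n + 1) + 1 ≤ K * (pick w' - m) / (n + 1) := by
      have h7 : (K * (pick w - m) + (n + 1)) / (n + 1) ≤ K * (pick w' - m) / (n + 1) :=
        Nat.div_le_div_right (by omega)
      rwa [Nat.add_div_right _ (by omega)] at h7
    simp only [hg] at hgeq
    omega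
  have hcard := Finset.card_le_card_of_injOn g
    (t := Finset.range C)
    (by intro w hw
        simp only [Finset.mem_coe, Finset.mem_range, hg]
        rw [Nat.div_lt_iff_lt_mul (by omega : 0 < n + 1)]
        obtain ⟨hb1, hb2, _⟩ := hpick_spec w hw
        have h8 : pick w - m + 1 ≤ M := by omega
        have h9 : K * (pick w - m) + K ≤ K * M := by
          have := Nat.mul_le_mul_left K h8
          rw [Nat.mul_add, mul_one] at this
          omega
        have h10 : K * M = C * n := by rw [hM, hC]; ring
        have h11 : C * (n + 1) = C * n + C := by ring
        omega)
    (by intro w hw w' hw' he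
        simp only [Finset.mem_coe] at hw hw'
        rcases lt_trichotomy (pick w) (pick w') with h | h | h
        · exact absurd he (hmono w hw w' hw' h)
        · exact inj1 w hw w' hw' h
        · exact absurd he.symm (hmono w' hw' w hw h))
  simpa using hcard


end LRP

/-- **Properties of non-periodic linearly recurrent sequences.** Let `x` be linearly
recurrent with constant `K` and not ultimately periodic. Then: (1) `x` has at most `Kn`
factors of length `n`; (2) `x` is `(K+1)`-power free; (3) every return word `w` to a
nonempty factor `u` satisfies `|w| > |u|/K`; (4) `u` has at most `K(K+1)²` return words. -/
theorem linearly_recurrent_properties {A : Type*} (x : ℕ → A) (K : ℕ)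
    (hlr : LinearlyRecurrent x K) (hnp : ¬ UltimatelyPeriodic x) :
    (∀ n : ℕ, 1 ≤ n →
      { u : List A | u.length = n ∧ IsFactor x u }.Finite ∧
      { u : List A | u.length = n ∧ IsFactor x u }.ncard ≤ K * n) ∧
    (∀ u : List A, IsFactor x (List.replicate (K + 1) u).flatten → u = []) ∧
    (∀ u w : List A, u ≠ [] → IsFactor x u → IsReturnWord x u w →
      u.length < K * w.length) ∧
    (∀ u : List A, u ≠ [] → IsFactor x u →
      { w : List A | IsReturnWord x u w }.Finite ∧
      { w : List A | IsReturnWord x u w }.ncard ≤ K * (K + 1) ^ 2) := by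
  have part1 : ∀ n : ℕ, 1 ≤ n →
      { u : List A | u.length = n ∧ IsFactor x u }.Finite ∧
      { u : List A | u.length = n ∧ IsFactor x u }.ncard ≤ K * n := fun n hn =>
    LRP.finite_and_ncard_le (fun S hS => LRP.complexity_bound hlr hn S hS)
  have hfin : ∀ m, 1 ≤ m → { u : List A | u.length = m ∧ IsFactor x u }.Finite :=
    fun m hm => (part1 m hm).1
  have part2 := LRP.power_free hlr hnp hfin
  have part3' := LRP.return_long hlr part2
  have hCle : K * K * (K + 1) ≤ K * (K + 1) ^ 2 := by
    have h1 : K * K * (K + 1) ≤ K * (K + 1) * (K + 1) :=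
      Nat.mul_le_mul_right (K + 1) (Nat.mul_le_mul_left K (by omega))
    have h2 : K * (K + 1) * (K + 1) = K * (K + 1) ^ 2 := by ring
    omega
  refine ⟨part1, part2, fun u w hu _ hr => part3' u w hu hr, fun u hu hfu => ?_⟩
  exact LRP.finite_and_ncard_le (fun S hS =>
    le_trans (LRP.return_card hlr part3' hu hfu S hS) hCle)
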